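/- arXiv:2208.02573 — 6 statements merged into one kernel-verified Lean document; each statement's English description precedes it below -/
import Mathlib

section
/- Let c be a symmetric positive-definite I×I real matrix, η a K×K real matrix, and f an I×K real matrix such that f* c f is nonsingular. Then for every I×K real matrix x such that f* c x is nonsingular, tr(η* (x* c f)^{-1} (x* c x) (f* c x)^{-1} η) ≥ tr(η* (f* c f)^{-1} η). In other words, the function x ↦ ‖(x* c x)^{1/2} (f* c x)^{-1} η‖_F² is minimised at x = f. -/
open Matrix

/-- Lemma 1 (Frobenius minimisation): for symmetric positive-definite `c`,
any `η`, and `f` with `fᵀ c f` nonsingular, among all `x` with `fᵀ c x`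
nonsingular, the quantity `tr(ηᵀ (xᵀcf)⁻¹ (xᵀcx) (fᵀcx)⁻¹ η)` is minimised
at `x = f`, where it equals `tr(ηᵀ (fᵀcf)⁻¹ η)`. -/
theorem stmt0 {I K : Type*} [Fintype I] [Fintype K] [DecidableEq I] [DecidableEq K]
    (c : Matrix I I ℝ) (hc : c.PosDef)
    (η : Matrix K K ℝ) (f : Matrix I K ℝ)
    (hf : IsUnit (fᵀ * c * f).det)
    (x : Matrix I K ℝ) (hx : IsUnit (fᵀ * c * x).det) :
    (ηᵀ * (fᵀ * c * f)⁻¹ * η).trace ≤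
      (ηᵀ * (xᵀ * c * f)⁻¹ * (xᵀ * c * x) * (fᵀ * c * x)⁻¹ * η).trace := by
  have hct : cᵀ = c := by
    have h := hc.1
    rwa [Matrix.IsHermitian, Matrix.conjTranspose_eq_transpose_of_trivial] at h
  have hxf : (xᵀ * c * f) = (fᵀ * c * x)ᵀ := by
    simp [Matrix.transpose_mul, hct, Matrix.mul_assoc]
  have hx' : IsUnit (xᵀ * c * f).det := by rw [hxf, Matrix.det_transpose]; exact hx
  have hB : (fᵀ * c * f)ᵀ = fᵀ * c * f := by
    simp [Matrix.transpose_mul, hct, Matrix.mul_assoc]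
  set u := x * (fᵀ * c * x)⁻¹ * η with hu
  set v := f * (fᵀ * c * f)⁻¹ * η with hv
  set m := u - v with hm
  have hpsd : (mᵀ * c * m).PosSemidef := by
    have := hc.posSemidef.conjTranspose_mul_mul_same m
    rwa [Matrix.conjTranspose_eq_transpose_of_trivial] at this
  have h1 : uᵀ * c * u = ηᵀ * (xᵀ * c * f)⁻¹ * (xᵀ * c * x) * (fᵀ * c * x)⁻¹ * η := by
    rw [hu]
    simp only [Matrix.transpose_mul, Matrix.transpose_nonsing_inv, ← hxf, hct,
      Matrix.transpose_transpose, Matrix.mul_assoc]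
  have h2 : uᵀ * c * v = ηᵀ * (fᵀ * c * f)⁻¹ * η := by
    have hinv : (xᵀ * c * f)⁻¹ * (xᵀ * c * f) = 1 := Matrix.nonsing_inv_mul _ hx'
    calc uᵀ * c * v = ηᵀ * ((xᵀ * c * f)⁻¹ * (xᵀ * c * f)) * ((fᵀ * c * f)⁻¹ * η) := by
          rw [hu, hv]
          simp only [Matrix.transpose_mul, Matrix.transpose_nonsing_inv, ← hxf, hct,
            Matrix.transpose_transpose, Matrix.mul_assoc]
      _ = ηᵀ * (fᵀ * c * f)⁻¹ * η := by rw [hinv, Matrix.mul_one]; simp only [Matrix.mul_assoc]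
  have h3 : vᵀ * c * u = ηᵀ * (fᵀ * c * f)⁻¹ * η := by
    have hinv : (fᵀ * c * x) * (fᵀ * c * x)⁻¹ = 1 := Matrix.mul_nonsing_inv _ hx
    calc vᵀ * c * u = ηᵀ * (fᵀ * c * f)⁻¹ * ((fᵀ * c * x) * (fᵀ * c * x)⁻¹) * η := by
          rw [hu, hv]
          simp only [Matrix.transpose_mul, Matrix.transpose_nonsing_inv, hB, hct,
            Matrix.transpose_transpose, Matrix.mul_assoc]
      _ = ηᵀ * (fᵀ * c * f)⁻¹ * η := by rw [hinv, Matrix.mul_one]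
  have h4 : vᵀ * c * v = ηᵀ * (fᵀ * c * f)⁻¹ * η := by
    have hinv : (fᵀ * c * f) * (fᵀ * c * f)⁻¹ = 1 := Matrix.mul_nonsing_inv _ hf
    calc vᵀ * c * v = ηᵀ * (fᵀ * c * f)⁻¹ * ((fᵀ * c * f) * (fᵀ * c * f)⁻¹) * η := by
          rw [hv]
          simp only [Matrix.transpose_mul, Matrix.transpose_nonsing_inv, hB, hct,
            Matrix.transpose_transpose, Matrix.mul_assoc]
      _ = ηᵀ * (fᵀ * c * f)⁻¹ * η := by rw [hinv, Matrix.mul_one]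
  have hexp : mᵀ * c * m = uᵀ * c * u - uᵀ * c * v - (vᵀ * c * u - vᵀ * c * v) := by
    rw [hm, Matrix.transpose_sub, Matrix.sub_mul, Matrix.sub_mul, Matrix.mul_sub,
      Matrix.mul_sub]
  have htr : 0 ≤ (mᵀ * c * m).trace := by
    rw [Matrix.trace]
    apply Finset.sum_nonneg
    intro i _
    simpa using hpsd.diag_nonneg (i := i)
  rw [hexp, Matrix.trace_sub, Matrix.trace_sub, Matrix.trace_sub, h1, h2, h3, h4] at htr
  linarith
end

section
/- Let c ∈ ℝ^{I×I} be symmetric nonnegative definite and let p ∈ ℝ^{I×I} be an orthogonal projection matrix (p² = p = p*). Let c_{pp} := p c p, and let c_{pp}^† denote the Moore–Penrose pseudoinverse of c_{pp} (equivalently, the inverse of c_{pp} viewed as a linear map on the range of p). Then c c_{pp}^† c ≤ c in the Loewner order of nonnegative definite matrices; i.e., c − c c_{pp}^† c is nonnegative definite. -/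
open Matrix

/-- `d` is the Moore–Penrose pseudoinverse of `m` (the four Penrose conditions). -/
def IsMoorePenrose {I : Type*} [Fintype I] [DecidableEq I]
    (m d : Matrix I I ℝ) : Prop :=
  m * d * m = m ∧ d * m * d = d ∧ (m * d)ᵀ = m * d ∧ (d * m)ᵀ = d * m

lemma mp_unique {I : Type*} [Fintype I] [DecidableEq I] {m d1 d2 : Matrix I I ℝ}
    (h1 : IsMoorePenrose m d1) (h2 : IsMoorePenrose m d2) : d1 = d2 := by
  obtain ⟨a1, b1, c1, e1⟩ := h1
  obtain ⟨a2, b2, c2, e2⟩ := h2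
  have hmd : m * d1 = m * d2 := by
    calc m * d1 = (m * d1)ᵀ := c1.symm
    _ = ((m * d2) * (m * d1))ᵀ := by rw [show (m * d2) * (m * d1) = (m * d2 * m) * d1 by noncomm_ring, a2]
    _ = (m * d1)ᵀ * (m * d2)ᵀ := by rw [transpose_mul]
    _ = (m * d1) * (m * d2) := by rw [c1, c2]
    _ = m * d2 := by rw [show (m * d1) * (m * d2) = (m * d1 * m) * d2 by noncomm_ring, a1]
  have hdm : d1 * m = d2 * m := by
    calc d1 * m = (d1 * m)ᵀ := e1.symm
    _ = ((d1 * m) * (d2 * m))ᵀ := by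
        rw [show (d1 * m) * (d2 * m) = d1 * (m * d2 * m) by noncomm_ring, a2]
    _ = (d2 * m)ᵀ * (d1 * m)ᵀ := by rw [transpose_mul]
    _ = (d2 * m) * (d1 * m) := by rw [e1, e2]
    _ = d2 * m := by rw [show (d2 * m) * (d1 * m) = d2 * (m * d1 * m) by noncomm_ring, a1]
  calc d1 = d1 * m * d1 := b1.symm
  _ = d2 * m * d1 := by rw [hdm]
  _ = d2 * (m * d1) := by rw [mul_assoc]
  _ = d2 * (m * d2) := by rw [hmd]
  _ = d2 := by rw [← mul_assoc, b2]

/-- Lemma 2: for `c` symmetric nonnegative definite and `p` an orthogonal projection,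
with `c_{pp} := p c p` and `c_{pp}†` its Moore–Penrose pseudoinverse, one has
`c c_{pp}† c ≤ c` in the Loewner order, i.e. `c - c c_{pp}† c` is nonnegative definite. -/
theorem stmt2 {I : Type*} [Fintype I] [DecidableEq I]
    (c p d : Matrix I I ℝ) (hc : c.PosSemidef)
    (hp_proj : p * p = p) (hp_symm : pᵀ = p)
    (hd : IsMoorePenrose (p * c * p) d) :
    (c - c * d * c).PosSemidef := by
  set m := p * c * p with hm
  have hct : cᵀ = c := hc.isHermitian
  have hms : mᵀ = m := by
    rw [hm, transpose_mul, transpose_mul, hp_symm, hct, mul_assoc]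
  obtain ⟨a1, b1, c1, e1⟩ := hd
  -- d is symmetric by uniqueness of the MP inverse
  have hdt : dᵀ = d := by
    refine mp_unique (m := m) ?_ ⟨a1, b1, c1, e1⟩
    refine ⟨?_, ?_, ?_, ?_⟩
    · have := congrArg Matrix.transpose a1
      simpa only [transpose_mul, hms, Matrix.mul_assoc] using this
    · have := congrArg Matrix.transpose b1
      simpa only [transpose_mul, hms, Matrix.mul_assoc] using this
    · have h : m * dᵀ = (d * m)ᵀ := by rw [transpose_mul, hms]
      rw [h, transpose_transpose]; exact e1.symm
    · have h : dᵀ * m = (m * d)ᵀ := by rw [transpose_mul, hms]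
      rw [h, transpose_transpose]; exact c1.symm
  have hmp : m * p = m := by rw [hm, mul_assoc, hp_proj]
  have hpm : p * m = m := by rw [hm, ← mul_assoc, ← mul_assoc, hp_proj]
  -- d p = d and p d = d
  have hddm : d * dᵀ * m = d := by
    have hmd' : m * d = dᵀ * m := by rw [← c1, transpose_mul, hms]
    calc d * dᵀ * m = d * (dᵀ * m) := by rw [mul_assoc]
    _ = d * (m * d) := by rw [hmd']
    _ = d := by rw [← mul_assoc, b1]
  have hdp : d * p = d := by
    calc d * p = d * dᵀ * m * p := by rw [hddm]
    _ = d * dᵀ * (m * p) := by rw [mul_assoc]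
    _ = d := by rw [hmp, hddm]
  have hpd : p * d = d := by
    calc p * d = (dᵀ * pᵀ)ᵀ := by simp
    _ = (dᵀ * p)ᵀ := by rw [hp_symm]
    _ = (d * p)ᵀ := by rw [hdt]
    _ = d := by rw [hdp, hdt]
  have hdcd : d * c * d = d := by
    calc d * c * d = (d * p) * c * (p * d) := by rw [hdp, hpd]
    _ = d * (p * c * p) * d := by noncomm_ring
    _ = d := by rw [← hm, b1]
  -- square root of c
  obtain ⟨s, hss, hsH⟩ : ∃ s : Matrix I I ℝ, s * s = c ∧ sᴴ = s := by
    open scoped MatrixOrder Matrix.Norms.L2Operator in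
    exact ⟨CFC.sqrt c, CFC.sqrt_mul_sqrt_self c hc.nonneg, (CFC.sqrt_nonneg c).posSemidef.isHermitian⟩
  set e := s * d * s with he
  have hee : e * e = e := by
    calc e * e = s * (d * (s * s) * d) * s := by rw [he]; noncomm_ring
    _ = s * (d * c * d) * s := by rw [hss]
    _ = e := by rw [hdcd, he]
  have heH : eᴴ = e := by
    have : eᵀ = e := by
      rw [he, transpose_mul, transpose_mul]
      have hst : sᵀ = s := hsH
      rw [hst, hdt, mul_assoc]
    exact this
  have h1e : (1 - e).PosSemidef := by
    have : (1 - e) = (1 - e)ᴴ * (1 - e) := by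
      rw [conjTranspose_sub, heH, conjTranspose_one]
      rw [sub_mul, mul_sub, mul_sub, hee]
      noncomm_ring
    rw [this]
    exact posSemidef_conjTranspose_mul_self _
  have key : c - c * d * c = s * (1 - e) * sᴴ := by
    rw [hsH, he, mul_sub, sub_mul, mul_one, hss]
    congr 1
    calc c * d * c = (s * s) * d * (s * s) := by rw [hss]
    _ = s * (s * d * s) * s := by noncomm_ring
  rw [key]
  exact h1e.mul_mul_conjTranspose_same s
end

section
/- Let z ∈ ℝ^I and let h ∈ ℝ^{I×I} be symmetric nonnegative definite with h z ≠ 0. Then the function y ↦ (1/4)‖y − z‖⁴ + ‖h^{1/2} y‖² on ℝ^I is strictly convex and has a unique minimiser, given by y = (id + b^{-1} h)^{-1} z, where b ∈ (0, ‖z‖²/2) is the unique positive solution of the one-dimensional equation (1/2)‖(h + b·id)^{-1} h z‖² = b. -/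
set_option maxHeartbeats 1000000


open Matrix Filter

/-- The shrinkage objective `y ↦ (1/4)‖y − z‖⁴ + ‖h^{1/2} y‖²`, written via dot
products: `‖y − z‖² = (y−z)⬝ᵥ(y−z)` and `‖h^{1/2} y‖² = y ⬝ᵥ h y` for `h`
symmetric nonnegative definite. -/
noncomputable def shrinkObj {I : Type*} [Fintype I]
    (h : Matrix I I ℝ) (z y : I → ℝ) : ℝ :=
  (1 / 4) * ((y - z) ⬝ᵥ (y - z)) ^ 2 + y ⬝ᵥ h.mulVec y

section aux

variable {I : Type*} [Fintype I]

lemma dp_self_nonneg (v : I → ℝ) : 0 ≤ v ⬝ᵥ v :=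
  Finset.sum_nonneg fun i _ => mul_self_nonneg _

lemma dp_self_pos {v : I → ℝ} (hv : v ≠ 0) : 0 < v ⬝ᵥ v :=
  lt_of_le_of_ne (dp_self_nonneg v)
    fun h0 => hv (dotProduct_self_eq_zero.mp h0.symm)

lemma dp_cauchy (u v : I → ℝ) : (u ⬝ᵥ v) ^ 2 ≤ (u ⬝ᵥ u) * (v ⬝ᵥ v) := by
  have := Finset.sum_mul_sq_le_sq_mul_sq Finset.univ u v
  simpa [dotProduct, sq] using this

lemma transpose_eq_self {h : Matrix I I ℝ} (hsym : h.IsHermitian) : hᵀ = h := by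
  ext i j
  have := congrFun (congrFun hsym.eq i) j
  simpa using this

lemma dp_sym {h : Matrix I I ℝ} (hsym : h.IsHermitian) (u v : I → ℝ) :
    u ⬝ᵥ h *ᵥ v = v ⬝ᵥ h *ᵥ u := by
  rw [Matrix.dotProduct_mulVec, ← Matrix.mulVec_transpose, transpose_eq_self hsym,
    dotProduct_comm]

lemma psd_nonneg {h : Matrix I I ℝ} (hh : h.PosSemidef) (u : I → ℝ) :
    0 ≤ u ⬝ᵥ h *ᵥ u := by
  simpa using hh.dotProduct_mulVec_nonneg u

/-- If a quartic polynomial with zero constant term is nonnegative everywhere,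
its linear coefficient vanishes. -/
lemma poly_coeff_zero {G c2 c3 c4 : ℝ}
    (h : ∀ t : ℝ, 0 ≤ G * t + (c2 * t ^ 2 + (c3 * t ^ 3 + c4 * t ^ 4))) : G = 0 := by
  have hd : HasDerivAt
      (fun t : ℝ => G * t + (c2 * t ^ 2 + (c3 * t ^ 3 + c4 * t ^ 4))) G 0 := by
    have h1 := ((hasDerivAt_id (0:ℝ)).const_mul G).add
      ((((hasDerivAt_pow 2 (0:ℝ)).const_mul c2).add
        (((hasDerivAt_pow 3 (0:ℝ)).const_mul c3).add
          ((hasDerivAt_pow 4 (0:ℝ)).const_mul c4))))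
    simpa [Pi.add_def] using h1
  have hmin : IsLocalMin
      (fun t : ℝ => G * t + (c2 * t ^ 2 + (c3 * t ^ 3 + c4 * t ^ 4))) 0 :=
    Filter.Eventually.of_forall fun t => by simpa using h t
  exact hmin.hasDerivAt_eq_zero hd

lemma strictconv (h : Matrix I I ℝ) (hh : h.PosSemidef) (z : I → ℝ) :
    StrictConvexOn ℝ Set.univ (shrinkObj h z) := by
  refine ⟨convex_univ, fun x _ y _ hxy a b ha hb hab => ?_⟩
  set u := x - z with hu
  set v := y - z with hv
  have hmid : a • x + b • y - z = a • u + b • v := by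
    funext i
    simp only [hu, hv, Pi.add_apply, Pi.smul_apply, Pi.sub_apply, smul_eq_mul]
    linear_combination (z i) * hab
  have huv : u - v = x - y := by rw [hu, hv]; abel
  have hxy' : u - v ≠ 0 := by
    rw [huv, sub_ne_zero]; exact hxy
  set A := u ⬝ᵥ u with hA
  set B := v ⬝ᵥ v with hB
  set C := u ⬝ᵥ v with hC
  have hDpos : 0 < (u - v) ⬝ᵥ (u - v) := dp_self_pos hxy'
  have hDrel : (u - v) ⬝ᵥ (u - v) = A - 2 * C + B := by
    simp only [sub_dotProduct, dotProduct_sub, hA, hB, hC]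
    rw [dotProduct_comm v u]; ring
  have e1 : (a • u + b • v) ⬝ᵥ (a • u + b • v)
      = a ^ 2 * A + 2 * (a * b) * C + b ^ 2 * B := by
    simp only [add_dotProduct, dotProduct_add, smul_dotProduct,
      dotProduct_smul, smul_eq_mul, hA, hB, hC]
    rw [dotProduct_comm v u]; ring
  have hq0 : 0 ≤ a ^ 2 * A + 2 * (a * b) * C + b ^ 2 * B := by
    rw [← e1]; exact dp_self_nonneg _
  set E := x ⬝ᵥ h *ᵥ y with hE
  set Qx := x ⬝ᵥ h *ᵥ x with hQx
  set Qy := y ⬝ᵥ h *ᵥ y with hQy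
  have e2 : (a • x + b • y) ⬝ᵥ h *ᵥ (a • x + b • y)
      = a ^ 2 * Qx + 2 * (a * b) * E + b ^ 2 * Qy := by
    simp only [Matrix.mulVec_add, Matrix.mulVec_smul, add_dotProduct,
      dotProduct_add, smul_dotProduct, dotProduct_smul,
      smul_eq_mul, hQx, hQy, hE]
    rw [dp_sym hh.1 y x]; ring
  have hQd : 0 ≤ (x - y) ⬝ᵥ h *ᵥ (x - y) := psd_nonneg hh _
  have e3 : (x - y) ⬝ᵥ h *ᵥ (x - y) = Qx - 2 * E + Qy := by
    simp only [Matrix.mulVec_sub, sub_dotProduct, dotProduct_sub,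
      hQx, hQy, hE]
    rw [dp_sym hh.1 y x]; ring
  have hA0 : 0 ≤ A := dp_self_nonneg u
  have hB0 : 0 ≤ B := dp_self_nonneg v
  have hD0 : 0 < A - 2 * C + B := hDrel ▸ hDpos
  -- the quartic part
  have hSab : a ^ 2 * A + 2 * (a * b) * C + b ^ 2 * B
      = a * A + b * B - a * b * (A - 2 * C + B) := by
    linear_combination (A * a + B * b) * hab
  have habD : 0 < a * b * (A - 2 * C + B) := mul_pos (mul_pos ha hb) hD0
  have hS0 : 0 ≤ a * A + b * B - a * b * (A - 2 * C + B) := by rw [← hSab]; exact hq0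
  have hid : a * A ^ 2 + b * B ^ 2
      = (a * A + b * B) ^ 2 + a * b * (A - B) ^ 2 := by
    linear_combination (-(A ^ 2 * a + B ^ 2 * b)) * hab
  have key : (a ^ 2 * A + 2 * (a * b) * C + b ^ 2 * B) ^ 2 < a * A ^ 2 + b * B ^ 2 := by
    rw [hSab, hid]
    nlinarith [mul_nonneg habD.le hS0, mul_pos habD habD,
      mul_nonneg (mul_nonneg ha.le hb.le) (sq_nonneg (A - B))]
  have hQmid : a ^ 2 * Qx + 2 * (a * b) * E + b ^ 2 * Qy
      ≤ a * Qx + b * Qy := by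
    have hQd' : 0 ≤ Qx - 2 * E + Qy := by rw [← e3]; exact hQd
    have h4 : 0 ≤ a * b * (Qx - 2 * E + Qy) :=
      mul_nonneg (mul_nonneg ha.le hb.le) hQd'
    have h5 : a * Qx + b * Qy - (a ^ 2 * Qx + 2 * (a * b) * E + b ^ 2 * Qy)
        = a * b * (Qx - 2 * E + Qy) := by
      linear_combination (-(Qx * a + Qy * b)) * hab
    linarith
  have hxmz : a • x + b • y - z = a • u + b • v := hmid
  show shrinkObj h z (a • x + b • y) < a • shrinkObj h z x + b • shrinkObj h z y
  unfold shrinkObj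
  rw [hxmz, e1, e2, smul_eq_mul, smul_eq_mul, ← hu, ← hv]
  rw [← hA, ← hB, ← hQx, ← hQy]
  linarith [key, hQmid]

end aux

/-- Lemma 3 (case `z ∉ ker h`): the objective is strictly convex; there is a unique
`b ∈ (0, ‖z‖²/2)` solving `(1/2)‖(h + b·id)⁻¹ h z‖² = b`, and for this `b` the point
`y = (id + b⁻¹ h)⁻¹ z` is the unique minimiser of the objective. -/
theorem stmt4 {I : Type*} [Fintype I] [DecidableEq I]
    (h : Matrix I I ℝ) (hh : h.PosSemidef) (z : I → ℝ) (hz : h.mulVec z ≠ 0) :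
    StrictConvexOn ℝ Set.univ (shrinkObj h z) ∧
    ∃! b : ℝ, b ∈ Set.Ioo 0 ((z ⬝ᵥ z) / 2) ∧
      (1 / 2) * ((h + b • (1 : Matrix I I ℝ))⁻¹.mulVec (h.mulVec z) ⬝ᵥ
        (h + b • (1 : Matrix I I ℝ))⁻¹.mulVec (h.mulVec z)) = b ∧
      ∀ y : I → ℝ, y ≠ ((1 : Matrix I I ℝ) + b⁻¹ • h)⁻¹.mulVec z →
        shrinkObj h z (((1 : Matrix I I ℝ) + b⁻¹ • h)⁻¹.mulVec z) < shrinkObj h z y := by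
  have hsc := strictconv h hh z
  refine ⟨hsc, ?_⟩
  -- generic facts about `h + β • 1` for `β > 0`
  have posdef : ∀ β : ℝ, 0 < β → (h + β • (1 : Matrix I I ℝ)).PosDef := by
    intro β hβ
    refine Matrix.PosDef.of_dotProduct_mulVec_pos (hh.1.add ?_) ?_
    · unfold Matrix.IsHermitian
      rw [Matrix.conjTranspose_smul, Matrix.conjTranspose_one]
      simp
    · intro x hx
      have h1 := psd_nonneg hh x
      have h2 := dp_self_pos hx
      simp only [star_trivial, Matrix.add_mulVec, Matrix.smul_mulVec,
        Matrix.one_mulVec, dotProduct_add, dotProduct_smul, smul_eq_mul]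
      nlinarith [mul_pos hβ h2]
  have detfact : ∀ β : ℝ, 0 < β → IsUnit (h + β • (1 : Matrix I I ℝ)).det := by
    intro β hβ
    exact (Matrix.isUnit_iff_isUnit_det _).mp (posdef β hβ).isUnit
  -- the inverse in the statement, rewritten
  have hinv_eq : ∀ β : ℝ, 0 < β →
      ((1 : Matrix I I ℝ) + β⁻¹ • h)⁻¹ = β • (h + β • (1 : Matrix I I ℝ))⁻¹ := by
    intro β hβ
    have hsum : (1 : Matrix I I ℝ) + β⁻¹ • h = β⁻¹ • (h + β • (1 : Matrix I I ℝ)) := by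
      rw [smul_add, smul_smul, inv_mul_cancel₀ hβ.ne', one_smul, add_comm]
    rw [hsum]
    apply Matrix.inv_eq_left_inv
    rw [Matrix.smul_mul, Matrix.mul_smul, smul_smul, mul_inv_cancel₀ hβ.ne',
      one_smul, Matrix.nonsing_inv_mul _ (detfact β hβ)]
  -- `w_β = z - y_β` identity
  have hw_eq : ∀ β : ℝ, 0 < β →
      (h + β • (1 : Matrix I I ℝ))⁻¹ *ᵥ (h *ᵥ z)
        = z - ((1 : Matrix I I ℝ) + β⁻¹ • h)⁻¹ *ᵥ z := by
    intro β hβ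
    set M := h + β • (1 : Matrix I I ℝ) with hM
    have hMz : M *ᵥ (z - β • (M⁻¹ *ᵥ z)) = h *ᵥ z := by
      rw [Matrix.mulVec_sub, Matrix.mulVec_smul, Matrix.mulVec_mulVec,
        Matrix.mul_nonsing_inv _ (detfact β hβ), Matrix.one_mulVec, hM,
        Matrix.add_mulVec, Matrix.smul_mulVec, Matrix.one_mulVec]
      abel
    rw [hinv_eq β hβ, Matrix.smul_mulVec, ← hMz, Matrix.mulVec_mulVec,
      Matrix.nonsing_inv_mul _ (detfact β hβ), Matrix.one_mulVec]
  -- existence of a global minimiser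
  have hNI : Nonempty I := by
    by_contra hI
    exact hz (funext fun i => absurd ⟨i⟩ hI)
  have hnorm_le : ∀ u : I → ℝ, ‖u‖ ^ 2 ≤ u ⬝ᵥ u := by
    intro u
    have h0 : 0 ≤ u ⬝ᵥ u := dp_self_nonneg u
    have h1 : ‖u‖ ≤ Real.sqrt (u ⬝ᵥ u) := by
      rw [pi_norm_le_iff_of_nonneg (Real.sqrt_nonneg _)]
      intro i
      rw [Real.norm_eq_abs, ← Real.sqrt_sq_eq_abs]
      apply Real.sqrt_le_sqrt
      rw [pow_two]
      exact Finset.single_le_sum (fun j _ => mul_self_nonneg (u j)) (Finset.mem_univ i)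
    calc ‖u‖ ^ 2 ≤ Real.sqrt (u ⬝ᵥ u) ^ 2 := by
          apply pow_le_pow_left₀ (norm_nonneg u) h1
      _ = u ⬝ᵥ u := Real.sq_sqrt h0
  have hcont : Continuous (shrinkObj h z) := by
    unfold shrinkObj Matrix.mulVec dotProduct
    apply Continuous.add
    · apply continuous_const.mul
      apply Continuous.pow
      exact continuous_finset_sum _ fun i _ =>
        ((continuous_apply i).sub continuous_const).mul
          ((continuous_apply i).sub continuous_const)
    · exact continuous_finset_sum _ fun i _ =>
        (continuous_apply i).mul
          (continuous_finset_sum _ fun j _ => continuous_const.mul (continuous_apply j))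
  have hco : Tendsto (shrinkObj h z) (cocompact (I → ℝ)) atTop := by
    have h1 : Tendsto (fun y : I → ℝ => (1/4) * (‖y‖ - ‖z‖) ^ 4)
        (cocompact (I → ℝ)) atTop := by
      have h2 : Tendsto (fun t : ℝ => (1/4) * (t - ‖z‖) ^ 4) atTop atTop := by
        apply Tendsto.const_mul_atTop (by norm_num : (0:ℝ) < 1/4)
        exact (tendsto_pow_atTop (by norm_num)).comp
          (tendsto_atTop_add_const_right _ _ tendsto_id)
      exact h2.comp tendsto_norm_cocompact_atTop
    apply tendsto_atTop_mono' _ _ h1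
    filter_upwards [tendsto_norm_cocompact_atTop.eventually (eventually_ge_atTop ‖z‖)]
      with y hy
    have h2 : ‖y‖ - ‖z‖ ≤ ‖y - z‖ := norm_sub_norm_le y z
    have hq : (‖y‖ - ‖z‖) ^ 2 ≤ (y - z) ⬝ᵥ (y - z) :=
      le_trans (pow_le_pow_left₀ (by linarith) h2 2) (hnorm_le (y - z))
    have h3 : 0 ≤ y ⬝ᵥ h *ᵥ y := psd_nonneg hh y
    have h4 : (‖y‖ - ‖z‖) ^ 4 ≤ ((y - z) ⬝ᵥ (y - z)) ^ 2 := by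
      nlinarith [hq, sq_nonneg (‖y‖ - ‖z‖), dp_self_nonneg (y - z)]
    show (1/4) * (‖y‖ - ‖z‖) ^ 4 ≤ shrinkObj h z y
    unfold shrinkObj
    linarith
  obtain ⟨y₀, hy₀⟩ := hcont.exists_forall_le hco
  -- first-order condition at the minimiser
  have hfoc : ∀ v : I → ℝ,
      ((y₀ - z) ⬝ᵥ (y₀ - z)) * ((y₀ - z) ⬝ᵥ v) + 2 * (y₀ ⬝ᵥ h *ᵥ v) = 0 := by
    intro v
    set u := y₀ - z with hu
    set A := u ⬝ᵥ u with hA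
    set C := u ⬝ᵥ v with hC
    set B := v ⬝ᵥ v with hB
    set Qy := y₀ ⬝ᵥ h *ᵥ y₀ with hQy
    set E := y₀ ⬝ᵥ h *ᵥ v with hE
    set F := v ⬝ᵥ h *ᵥ v with hF
    have hexp : ∀ t : ℝ, shrinkObj h z (y₀ + t • v)
        = (1/4) * (A + 2 * C * t + B * t ^ 2) ^ 2 + (Qy + 2 * E * t + F * t ^ 2) := by
      intro t
      unfold shrinkObj
      have h1 : y₀ + t • v - z = u + t • v := by rw [hu]; abel
      rw [h1]
      simp only [add_dotProduct, dotProduct_add, smul_dotProduct,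
        dotProduct_smul, Matrix.mulVec_add, Matrix.mulVec_smul, smul_eq_mul,
        hA, hB, hC, hQy, hE, hF]
      rw [dotProduct_comm v u, dp_sym hh.1 v y₀]
      ring
    have hpoly : ∀ t : ℝ, 0 ≤ (A * C + 2 * E) * t
        + ((C ^ 2 + A * B / 2 + F) * t ^ 2 + ((B * C) * t ^ 3 + (B ^ 2 / 4) * t ^ 4)) := by
      intro t
      have h5 := hy₀ (y₀ + t • v)
      have h6 : shrinkObj h z y₀ = 1 / 4 * A ^ 2 + Qy := by
        have h7 := hexp 0
        simpa using h7
      rw [hexp t, h6] at h5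
      nlinarith [h5]
    have := poly_coeff_zero hpoly
    linarith [this]
  -- the gradient as a vector equation
  have hg : ∀ i, ((y₀ - z) ⬝ᵥ (y₀ - z)) * ((y₀ - z) i) + 2 * (h *ᵥ y₀) i = 0 := by
    intro i
    have h1 := hfoc (Pi.single i 1)
    rw [dotProduct_single, dp_sym hh.1 y₀ (Pi.single i 1),
      single_dotProduct] at h1
    simpa using h1
  set b : ℝ := ((y₀ - z) ⬝ᵥ (y₀ - z)) / 2 with hbdef
  have hb0 : 0 ≤ b := by
    have := dp_self_nonneg (y₀ - z)
    rw [hbdef]; linarith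
  have hbpos : 0 < b := by
    rcases hb0.lt_or_eq with h1 | h1
    · exact h1
    · exfalso
      have h2 : (y₀ - z) ⬝ᵥ (y₀ - z) = 0 := by rw [hbdef] at h1; linarith
      have h3 : y₀ = z := by
        have := dotProduct_self_eq_zero.mp h2
        rwa [sub_eq_zero] at this
      apply hz
      funext i
      have h4 := hg i
      rw [h2, h3] at h4
      simpa using h4
  set M := h + b • (1 : Matrix I I ℝ) with hMdef
  have hdet : IsUnit M.det := detfact b hbpos
  -- M y₀ = b z
  have hMy : M *ᵥ y₀ = b • z := by
    funext i
    have h1 := hg i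
    simp only [hMdef, Matrix.add_mulVec, Matrix.smul_mulVec, Matrix.one_mulVec,
      Pi.add_apply, Pi.smul_apply, smul_eq_mul, Pi.sub_apply]
    have h2 : (y₀ - z) ⬝ᵥ (y₀ - z) = 2 * b := by rw [hbdef]; ring
    rw [h2] at h1
    simp only [Pi.sub_apply] at h1
    linarith
  -- hence y₀ is the point in the statement
  have hy0eq : ((1 : Matrix I I ℝ) + b⁻¹ • h)⁻¹ *ᵥ z = y₀ := by
    rw [hinv_eq b hbpos, Matrix.smul_mulVec]
    have : y₀ = M⁻¹ *ᵥ (M *ᵥ y₀) := by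
      rw [Matrix.mulVec_mulVec, Matrix.nonsing_inv_mul _ hdet, Matrix.one_mulVec]
    rw [this, hMy, Matrix.mulVec_smul]
  refine ⟨b, ⟨⟨hbpos, ?_⟩, ?_, ?_⟩, ?_⟩
  · -- b < (z ⬝ᵥ z)/2
    set w := z - y₀ with hwdef
    have hww : w ⬝ᵥ w = 2 * b := by
      have : w ⬝ᵥ w = (y₀ - z) ⬝ᵥ (y₀ - z) := by
        rw [hwdef, show z - y₀ = -(y₀ - z) by abel, neg_dotProduct,
          dotProduct_neg, neg_neg]
      rw [this, hbdef]; ring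
    have hhy : h *ᵥ y₀ = b • w := by
      have h1 : h *ᵥ y₀ + b • y₀ = b • z := by
        rw [← hMy, hMdef, Matrix.add_mulVec, Matrix.smul_mulVec, Matrix.one_mulVec]
      rw [hwdef, smul_sub]
      rw [← h1]; abel
    have hzw : w ⬝ᵥ w ≤ z ⬝ᵥ w := by
      have h1 : 0 ≤ y₀ ⬝ᵥ h *ᵥ y₀ := psd_nonneg hh y₀
      rw [hhy, dotProduct_smul, smul_eq_mul] at h1
      have h2 : 0 ≤ y₀ ⬝ᵥ w := nonneg_of_mul_nonneg_right h1 hbpos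
      have h3 : y₀ = z - w := by rw [hwdef]; abel
      rw [h3, sub_dotProduct] at h2
      linarith
    have hwltz : w ⬝ᵥ w < z ⬝ᵥ z := by
      by_contra h1
      push_neg at h1
      have h2 : (z - w) ⬝ᵥ (z - w) ≤ 0 := by
        have : (z - w) ⬝ᵥ (z - w) = z ⬝ᵥ z - 2 * (z ⬝ᵥ w) + w ⬝ᵥ w := by
          simp only [sub_dotProduct, dotProduct_sub]
          rw [dotProduct_comm w z]; ring
        rw [this]; linarith
      have h3 : z - w = 0 :=
        dotProduct_self_eq_zero.mp (le_antisymm h2 (dp_self_nonneg _))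
      have h4 : y₀ = 0 := by
        have : y₀ = z - w := by rw [hwdef]; abel
        rw [this, h3]
      have h5 : w = 0 := by
        have h6 : h *ᵥ y₀ = b • w := hhy
        rw [h4] at h6
        simp only [Matrix.mulVec_zero] at h6
        have := h6.symm
        rwa [smul_eq_zero_iff_right hbpos.ne'] at this
      apply hz
      have hzzero : z = 0 := by
        have : z = w + y₀ := by rw [hwdef]; abel
        rw [this, h4, h5]; simp
      rw [hzzero]; simp
    linarith [hww, hwltz]
  · -- fixed point equation
    have h1 : (h + b • (1 : Matrix I I ℝ))⁻¹ *ᵥ (h *ᵥ z) = z - y₀ := by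
      rw [hw_eq b hbpos, hy0eq]
    rw [h1]
    have h2 : (z - y₀) ⬝ᵥ (z - y₀) = (y₀ - z) ⬝ᵥ (y₀ - z) := by
      rw [show z - y₀ = -(y₀ - z) by abel, neg_dotProduct,
        dotProduct_neg, neg_neg]
    rw [h2, hbdef]; ring
  · -- strict minimality
    intro y hy
    rw [hy0eq] at hy ⊢
    rcases lt_or_ge (shrinkObj h z y₀) (shrinkObj h z y) with h1 | h1
    · exact h1
    · exfalso
      have h2 := hsc.2 (Set.mem_univ y₀) (Set.mem_univ y) (Ne.symm hy)
        (by norm_num : (0:ℝ) < 1/2) (by norm_num : (0:ℝ) < 1/2) (by norm_num)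
      have h3 := hy₀ ((1/2 : ℝ) • y₀ + (1/2 : ℝ) • y)
      have h4 := hy₀ y
      simp only [smul_eq_mul] at h2
      linarith
  · -- uniqueness
    rintro b' ⟨⟨hb'pos, _⟩, hfix', hmin'⟩
    -- the minimiser for b' coincides with y₀
    set y' := ((1 : Matrix I I ℝ) + b'⁻¹ • h)⁻¹ *ᵥ z with hy'def
    have hyy : y' = y₀ := by
      by_contra hne
      have h1 := hmin' y₀ (fun hc => hne hc.symm)
      have h2 := hy₀ y'
      linarith
    have h3 : (h + b' • (1 : Matrix I I ℝ))⁻¹ *ᵥ (h *ᵥ z) = z - y₀ := by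
      rw [hw_eq b' hb'pos, ← hy'def, hyy]
    rw [h3] at hfix'
    have h4 : (z - y₀) ⬝ᵥ (z - y₀) = (y₀ - z) ⬝ᵥ (y₀ - z) := by
      rw [show z - y₀ = -(y₀ - z) by abel, neg_dotProduct,
        dotProduct_neg, neg_neg]
    rw [h4] at hfix'
    rw [← hfix', hbdef]; ring
end

section
/- Let h ∈ ℝ^{I×I} be symmetric nonnegative definite with h z ≠ 0, and suppose y ∈ ℝ^I satisfies the first-order condition ‖y − z‖²(y − z) + 2 h y = 0 with y ≠ z. Then ‖z‖² = ‖y‖² + 4·((1/4)‖y − z‖⁴ + ‖h^{1/2} y‖²)/‖y − z‖². In particular ‖y‖ ≤ ‖z‖. -/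
open Matrix

/-- Remark on the shrinkage property: if `y ≠ z` satisfies the first-order condition
`‖y − z‖²(y − z) + 2 h y = 0` then
`‖z‖² = ‖y‖² + 4·((1/4)‖y − z‖⁴ + ‖h^{1/2} y‖²)/‖y − z‖²`; in particular `‖y‖ ≤ ‖z‖`.
Here `‖h^{1/2} y‖² = y ⬝ᵥ h y`. -/
theorem stmt6 {I : Type*} [Fintype I] [DecidableEq I]
    (h : Matrix I I ℝ) (hh : h.PosSemidef) (z y : I → ℝ) (hz : h.mulVec z ≠ 0)
    (hfoc : ((y - z) ⬝ᵥ (y - z)) • (y - z) + (2 : ℝ) • h.mulVec y = 0)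
    (hyz : y ≠ z) :
    z ⬝ᵥ z = y ⬝ᵥ y +
      4 * ((1 / 4) * ((y - z) ⬝ᵥ (y - z)) ^ 2 + y ⬝ᵥ h.mulVec y) / ((y - z) ⬝ᵥ (y - z)) ∧
    y ⬝ᵥ y ≤ z ⬝ᵥ z := by
  set d := y - z with hd
  set q : ℝ := d ⬝ᵥ d with hq
  have hd0 : d ≠ 0 := sub_ne_zero.mpr hyz
  have hqpos : 0 < q := by
    have hnn : 0 ≤ q := by
      rw [hq, dotProduct]; exact Finset.sum_nonneg fun i _ => mul_self_nonneg _
    rcases lt_or_eq_of_le hnn with hlt | heq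
    · exact hlt
    · exact absurd ((dotProduct_self_eq_zero).mp heq.symm) hd0
  have hHy : h.mulVec y = -((q / 2) • d) := by
    have : (2 : ℝ) • h.mulVec y = -(q • d) := by
      rw [eq_neg_iff_add_eq_zero, add_comm]; exact hfoc
    funext i
    have := congrFun this i
    simp [Pi.smul_apply, smul_eq_mul] at this ⊢
    linarith
  have hyHy : y ⬝ᵥ h.mulVec y = -(q / 2) * (y ⬝ᵥ d) := by
    rw [hHy]
    simp [dotProduct_neg, dotProduct_smul, smul_eq_mul]
  have hzz : z ⬝ᵥ z = y ⬝ᵥ y - 2 * (y ⬝ᵥ d) + q := by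
    have hz' : z = y - d := by rw [hd]; ring
    rw [hz', hq]
    simp [sub_dotProduct, dotProduct_sub, dotProduct_comm d y]
    ring
  have hHynn : 0 ≤ y ⬝ᵥ h.mulVec y := by simpa using hh.dotProduct_mulVec_nonneg y
  have heq : z ⬝ᵥ z = y ⬝ᵥ y +
      4 * ((1 / 4) * q ^ 2 + y ⬝ᵥ h.mulVec y) / q := by
    rw [hzz, hyHy]
    field_simp
    ring
  refine ⟨heq, ?_⟩
  rw [heq]
  have : 0 ≤ 4 * ((1 / 4) * q ^ 2 + y ⬝ᵥ h.mulVec y) / q := by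
    apply div_nonneg _ hqpos.le
    nlinarith
  linarith
end

section
/- Let z ∈ ℝ^I with z ≠ 0, let s > 0, and set h := s·id. Then the unique solution b ∈ (0, ‖z‖²/2) of (1/2)‖(h + b·id)^{-1} h z‖² = b satisfies the cubic equation (b/s)³ + 2(b/s)² + (b/s) − ‖z‖²/(2s) = 0, and the minimiser of y ↦ (1/4)‖y − z‖⁴ + s‖y‖² equals y = a z where a := b/(b + s) ∈ (0,1) satisfies −(‖z‖²/s)(1 − a)³ + 2a = 0. -/
open Matrix

private lemma aux_ineq (s a N D t : ℝ) (hs : 0 < s) (hD : 0 < D) (hN : 0 < N)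
    (hkey : 2 * s * a = (1 - a) ^ 3 * N) :
    (1/4) * ((a-1)^2 * N)^2 + s * (a^2 * N) <
      (1/4) * (D + 2*(a-1)*t + (a-1)^2 * N)^2 + s * (D + 2*a*t + a^2 * N) := by
  have hkey' : t * (2 * s * a) = t * ((1 - a)^3 * N) := by rw [hkey]
  nlinarith [sq_nonneg (D + 2*(a-1)*t), mul_pos hs hD,
    mul_nonneg (mul_nonneg (sq_nonneg (1-a)) hN.le) hD.le, hkey']

/-- Remark (scalar case `h = s·id`): the unique solution `b ∈ (0, ‖z‖²/2)` of
`(1/2)‖(h + b·id)⁻¹ h z‖² = b` satisfies the cubic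
`(b/s)³ + 2(b/s)² + (b/s) − ‖z‖²/(2s) = 0`, the minimiser of
`y ↦ (1/4)‖y − z‖⁴ + s‖y‖²` is `y = a z` with `a := b/(b+s) ∈ (0,1)`,
and `a` satisfies `−(‖z‖²/s)(1 − a)³ + 2a = 0`. -/
theorem stmt7 {I : Type*} [Fintype I] [DecidableEq I]
    (z : I → ℝ) (hz : z ≠ 0) (s : ℝ) (hs : 0 < s) :
    (∃! b : ℝ, b ∈ Set.Ioo 0 ((z ⬝ᵥ z) / 2) ∧
      (1 / 2) * (((s • (1 : Matrix I I ℝ)) + b • (1 : Matrix I I ℝ))⁻¹.mulVec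
          ((s • (1 : Matrix I I ℝ)).mulVec z) ⬝ᵥ
        ((s • (1 : Matrix I I ℝ)) + b • (1 : Matrix I I ℝ))⁻¹.mulVec
          ((s • (1 : Matrix I I ℝ)).mulVec z)) = b) ∧
    ∀ b : ℝ, b ∈ Set.Ioo 0 ((z ⬝ᵥ z) / 2) →
      (1 / 2) * (((s • (1 : Matrix I I ℝ)) + b • (1 : Matrix I I ℝ))⁻¹.mulVec
          ((s • (1 : Matrix I I ℝ)).mulVec z) ⬝ᵥ
        ((s • (1 : Matrix I I ℝ)) + b • (1 : Matrix I I ℝ))⁻¹.mulVec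
          ((s • (1 : Matrix I I ℝ)).mulVec z)) = b →
      (b / s) ^ 3 + 2 * (b / s) ^ 2 + b / s - (z ⬝ᵥ z) / (2 * s) = 0 ∧
      (b / (b + s)) ∈ Set.Ioo (0 : ℝ) 1 ∧
      (∀ y : I → ℝ, y ≠ (b / (b + s)) • z →
        shrinkObj (s • (1 : Matrix I I ℝ)) z ((b / (b + s)) • z)
          < shrinkObj (s • (1 : Matrix I I ℝ)) z y) ∧
      -((z ⬝ᵥ z) / s) * (1 - b / (b + s)) ^ 3 + 2 * (b / (b + s)) = 0 := by
  set N := z ⬝ᵥ z with hNdef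
  have hNnn : 0 ≤ N := Finset.sum_nonneg fun i _ => mul_self_nonneg _
  have hNne : N ≠ 0 := fun h => hz (dotProduct_self_eq_zero.mp h)
  have hN0 : 0 < N := lt_of_le_of_ne hNnn (Ne.symm hNne)
  -- simplify the fixed point expression
  have key : ∀ b : ℝ, s + b ≠ 0 →
      (1 / 2) * (((s • (1 : Matrix I I ℝ)) + b • (1 : Matrix I I ℝ))⁻¹.mulVec
          ((s • (1 : Matrix I I ℝ)).mulVec z) ⬝ᵥ
        ((s • (1 : Matrix I I ℝ)) + b • (1 : Matrix I I ℝ))⁻¹.mulVec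
          ((s • (1 : Matrix I I ℝ)).mulVec z)) = (1/2) * (s/(s+b))^2 * N := by
    intro b hsb
    have h0 : (s • (1:Matrix I I ℝ)) + b • 1 = (s+b) • 1 := by rw [add_smul]
    have h1 : ((s • (1:Matrix I I ℝ)) + b • 1)⁻¹ = (s+b)⁻¹ • 1 := by
      rw [h0]
      apply Matrix.inv_eq_right_inv
      rw [smul_mul_smul_comm, one_mul, mul_inv_cancel₀ hsb, one_smul]
    rw [h1]
    simp only [Matrix.smul_mulVec, Matrix.one_mulVec, smul_smul, smul_dotProduct,
      dotProduct_smul, smul_eq_mul, ← hNdef]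
    field_simp
  -- the fixed point equation is equivalent to a cubic
  have equiv : ∀ b ∈ Set.Ioo (0:ℝ) (N/2),
      ((1 / 2) * (((s • (1 : Matrix I I ℝ)) + b • (1 : Matrix I I ℝ))⁻¹.mulVec
          ((s • (1 : Matrix I I ℝ)).mulVec z) ⬝ᵥ
        ((s • (1 : Matrix I I ℝ)) + b • (1 : Matrix I I ℝ))⁻¹.mulVec
          ((s • (1 : Matrix I I ℝ)).mulVec z)) = b ↔ b * (s+b)^2 = s^2 * N / 2) := by
    intro b hb
    have hsb : (0:ℝ) < s + b := by linarith [hb.1]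
    rw [key b hsb.ne']
    constructor
    · intro h
      field_simp at h
      linarith
    · intro h
      field_simp
      linarith
  have gmono : StrictMonoOn (fun b : ℝ => b * (s+b)^2) (Set.Ici 0) := by
    intro x hx y hy hxy
    simp only [Set.mem_Ici] at hx hy
    have h1 : 0 < y - x := sub_pos.mpr hxy
    simp only
    nlinarith [mul_pos h1 (mul_pos hs hs),
      mul_nonneg (mul_nonneg h1.le hs.le) (add_nonneg hx hy),
      mul_nonneg h1.le (add_nonneg (add_nonneg (mul_nonneg hx hx) (mul_nonneg hx hy))
        (mul_nonneg hy hy))]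
  -- existence via IVT
  have hcont : ContinuousOn (fun b : ℝ => b * (s+b)^2) (Set.Icc 0 (N/2)) := by
    fun_prop
  have hmem : s^2 * N / 2 ∈ Set.Ioo ((fun b : ℝ => b * (s+b)^2) 0)
      ((fun b : ℝ => b * (s+b)^2) (N/2)) := by
    constructor
    · show (0:ℝ) * (s+0)^2 < s^2 * N / 2
      nlinarith [mul_pos (mul_pos hs hs) hN0]
    · show s^2 * N / 2 < (N/2) * (s+N/2)^2
      nlinarith [mul_pos hs hN0, mul_pos hN0 hN0]
  obtain ⟨b₀, hb₀mem, hb₀⟩ := intermediate_value_Ioo (by positivity : (0:ℝ) ≤ N/2) hcont hmem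
  have hb₀' : b₀ * (s+b₀)^2 = s^2 * N / 2 := hb₀
  refine ⟨⟨b₀, ⟨hb₀mem, (equiv b₀ hb₀mem).mpr hb₀'⟩, ?_⟩, ?_⟩
  · rintro b' ⟨hb'mem, hb'⟩
    have h1 := (equiv b' hb'mem).mp hb'
    exact gmono.injOn (Set.mem_Ici.mpr hb'mem.1.le) (Set.mem_Ici.mpr hb₀mem.1.le)
      (show b' * (s+b')^2 = b₀ * (s+b₀)^2 by rw [h1, hb₀'])
  · intro b hb heq
    have hcube : b * (s+b)^2 = s^2 * N / 2 := (equiv b hb).mp heq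
    have hb0 : 0 < b := hb.1
    have hbs : 0 < b + s := by linarith
    set a := b / (b + s) with ha
    have hkey : 2 * s * a = (1 - a)^3 * N := by
      rw [ha]
      field_simp
      linear_combination (2*s) * hcube
    refine ⟨?_, ⟨div_pos hb0 hbs, (div_lt_one hbs).mpr (by linarith)⟩, ?_, ?_⟩
    · field_simp
      linear_combination 2 * hcube
    · intro y hy
      have hdne : y - a • z ≠ 0 := sub_ne_zero.mpr hy
      set d := y - a • z with hd
      have hy' : y = d + a • z := by rw [hd]; abel
      have hDnn : 0 ≤ d ⬝ᵥ d := Finset.sum_nonneg fun i _ => mul_self_nonneg _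
      have hDne : d ⬝ᵥ d ≠ 0 := fun h => hdne (dotProduct_self_eq_zero.mp h)
      have hD0 : 0 < d ⬝ᵥ d := lt_of_le_of_ne hDnn (Ne.symm hDne)
      have hobj : ∀ w : I → ℝ, shrinkObj (s • (1 : Matrix I I ℝ)) z w
          = (1/4) * ((w - z) ⬝ᵥ (w - z))^2 + s * (w ⬝ᵥ w) := by
        intro w
        simp [shrinkObj, Matrix.smul_mulVec, Matrix.one_mulVec, dotProduct_smul]
      have e1 : (a • z - z) ⬝ᵥ (a • z - z) = (a-1)^2 * N := by
        simp only [sub_dotProduct, dotProduct_sub, smul_dotProduct,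
          dotProduct_smul, smul_eq_mul, ← hNdef]
        ring
      have e2 : (a • z) ⬝ᵥ (a • z) = a^2 * N := by
        simp only [smul_dotProduct, dotProduct_smul, smul_eq_mul, ← hNdef]
        ring
      have e3 : (y - z) ⬝ᵥ (y - z)
          = (d ⬝ᵥ d) + 2*(a-1)*(d ⬝ᵥ z) + (a-1)^2 * N := by
        have h4 : y - z = d + (a-1) • z := by
          rw [hy', sub_smul, one_smul]; abel
        rw [h4]
        simp only [add_dotProduct, dotProduct_add, smul_dotProduct,
          dotProduct_smul, smul_eq_mul, dotProduct_comm z d, ← hNdef]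
        ring
      have e4 : y ⬝ᵥ y = (d ⬝ᵥ d) + 2*a*(d ⬝ᵥ z) + a^2 * N := by
        rw [hy']
        simp only [add_dotProduct, dotProduct_add, smul_dotProduct,
          dotProduct_smul, smul_eq_mul, dotProduct_comm z d, ← hNdef]
        ring
      rw [hobj, hobj, e1, e2, e3, e4]
      exact aux_ineq s a N (d ⬝ᵥ d) (d ⬝ᵥ z) hs hD0 hN0 hkey
    · rw [ha] at hkey ⊢
      have hsne : s ≠ 0 := hs.ne'
      field_simp at hkey ⊢
      linear_combination hkey
end

section
/- Let h ∈ ℝ^{I×I} be symmetric positive semidefinite and z ∈ ℝ^I with h z ≠ 0. Then the map φ : (0, ∞) → (0, ∞), φ(b) := (1/2)‖(h + b·id)^{-1} h z‖², is continuous, strictly decreasing, tends to 0 as b → ∞, and satisfies φ(‖z‖²/2) < ‖z‖²/2. Consequently the equation φ(b) = b has a unique solution in (0, ‖z‖²/2). -/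
open Matrix

private lemma auxSumDot {I J : Type*} [Fintype I] [Fintype J] (g : J → I → ℝ) (w : I → ℝ) :
    (∑ j, g j) ⬝ᵥ w = ∑ j, g j ⬝ᵥ w := by
  simp only [dotProduct, Finset.sum_apply, Finset.sum_mul]
  exact Finset.sum_comm

private lemma auxDotSum {I J : Type*} [Fintype I] [Fintype J] (g : J → I → ℝ) (w : I → ℝ) :
    w ⬝ᵥ (∑ j, g j) = ∑ j, w ⬝ᵥ g j := by
  simp only [dotProduct, Finset.sum_apply, Finset.mul_sum]
  exact Finset.sum_comm

private lemma auxMulVecSum {I J : Type*} [Fintype I] [Fintype J]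
    (A : Matrix I I ℝ) (g : J → I → ℝ) :
    A *ᵥ (∑ j, g j) = ∑ j, A *ᵥ g j := by
  ext k
  simp only [Matrix.mulVec, dotProduct, Finset.sum_apply, Finset.mul_sum]
  exact Finset.sum_comm

/-- Properties of `φ(b) := (1/2)‖(h + b·id)⁻¹ h z‖²` for `h` symmetric nonnegative
definite with `h z ≠ 0`: `φ` is positive and continuous on `(0,∞)`, strictly
decreasing there, tends to `0` at `∞`, satisfies `φ(‖z‖²/2) < ‖z‖²/2`, and the
equation `φ(b) = b` has a unique solution in `(0, ‖z‖²/2)`. -/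
theorem stmt13 {I : Type*} [Fintype I] [DecidableEq I]
    (h : Matrix I I ℝ) (hh : h.PosSemidef) (z : I → ℝ) (hz : h.mulVec z ≠ 0) :
    let φ : ℝ → ℝ := fun b =>
      (1 / 2) * ((h + b • (1 : Matrix I I ℝ))⁻¹.mulVec (h.mulVec z) ⬝ᵥ
        (h + b • (1 : Matrix I I ℝ))⁻¹.mulVec (h.mulVec z))
    (∀ b ∈ Set.Ioi (0 : ℝ), 0 < φ b) ∧
    ContinuousOn φ (Set.Ioi 0) ∧
    StrictAntiOn φ (Set.Ioi 0) ∧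
    Filter.Tendsto φ Filter.atTop (nhds 0) ∧
    φ ((z ⬝ᵥ z) / 2) < (z ⬝ᵥ z) / 2 ∧
    (∃! b : ℝ, b ∈ Set.Ioo 0 ((z ⬝ᵥ z) / 2) ∧ φ b = b) := by
  classical
  intro φ
  have hherm := hh.1
  set s : I → ℝ := hherm.eigenvalues with hs_def
  have hs : ∀ i, 0 ≤ s i := hh.eigenvalues_nonneg
  set v := hherm.eigenvectorBasis with hv_def
  set V : I → (I → ℝ) := fun i => ⇑(v i) with hV_def
  set c : I → ℝ := fun i => v.repr ((WithLp.equiv 2 (I → ℝ)).symm z) i with hc_def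
  have hzdec : ∑ i, c i • V i = z := by
    have := v.sum_repr ((WithLp.equiv 2 (I → ℝ)).symm z)
    have h2 := congrArg (WithLp.equiv 2 (I → ℝ)) this
    simpa [c, V] using h2
  have hmul : ∀ i, h *ᵥ V i = s i • V i := fun i => hherm.mulVec_eigenvectorBasis i
  have hdot : ∀ i j, V i ⬝ᵥ V j = if i = j then 1 else 0 := by
    intro i j
    have horth := v.orthonormal
    rw [orthonormal_iff_ite] at horth
    have h2 := horth i j
    simpa [PiLp.inner_apply, RCLike.inner_apply, dotProduct, mul_comm] using h2
  have hnorm : ∀ f : I → ℝ, (∑ i, f i • V i) ⬝ᵥ (∑ i, f i • V i) = ∑ i, f i ^ 2 := by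
    intro f
    rw [auxSumDot]
    refine Finset.sum_congr rfl fun i _ => ?_
    rw [smul_dotProduct, auxDotSum]
    simp_rw [dotProduct_smul, hdot]
    simp [smul_eq_mul, mul_ite, Finset.sum_ite_eq, sq]
  have hhz : h *ᵥ z = ∑ i, (c i * s i) • V i := by
    rw [← hzdec, auxMulVecSum]
    refine Finset.sum_congr rfl fun i _ => ?_
    rw [Matrix.mulVec_smul, hmul, smul_smul]
  obtain ⟨i0, hi0⟩ : ∃ i, c i * s i ≠ 0 := by
    by_contra hcon
    push_neg at hcon
    exact hz (by rw [hhz]; simp [hcon])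
  have hs0 : 0 < s i0 := (hs i0).lt_of_ne fun hcon => hi0 (by rw [← hcon, mul_zero])
  have hc0 : c i0 ≠ 0 := fun hcon => hi0 (by rw [hcon, zero_mul])
  have hsqpos : 0 < (c i0 * s i0) ^ 2 :=
    lt_of_le_of_ne (sq_nonneg _) (Ne.symm (pow_ne_zero 2 hi0))
  have hcsq : 0 < c i0 ^ 2 := lt_of_le_of_ne (sq_nonneg _) (Ne.symm (pow_ne_zero 2 hc0))
  -- invertibility and the inverse formula
  have hposdef : ∀ b : ℝ, 0 < b → (h + b • (1 : Matrix I I ℝ)).PosDef := by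
    intro b hb
    refine Matrix.PosDef.posSemidef_add hh ?_
    rw [smul_one_eq_diagonal]
    exact Matrix.posDef_diagonal_iff.mpr fun _ => hb
  have hw : ∀ b : ℝ, 0 < b → (h + b • (1 : Matrix I I ℝ))⁻¹ *ᵥ (h *ᵥ z)
      = ∑ i, (c i * s i / (s i + b)) • V i := by
    intro b hb
    have hu : IsUnit (h + b • (1 : Matrix I I ℝ)).det :=
      (Matrix.isUnit_iff_isUnit_det _).mp (hposdef b hb).isUnit
    have h1 : (h + b • (1 : Matrix I I ℝ)) *ᵥ (∑ i, (c i * s i / (s i + b)) • V i)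
        = h *ᵥ z := by
      rw [hhz, auxMulVecSum]
      refine Finset.sum_congr rfl fun i _ => ?_
      have hne : s i + b ≠ 0 := ne_of_gt (by linarith [hs i])
      rw [Matrix.mulVec_smul, Matrix.add_mulVec, hmul, Matrix.smul_mulVec,
        Matrix.one_mulVec, ← add_smul, smul_smul]
      congr 1
      exact div_mul_cancel₀ _ hne
    rw [← h1, Matrix.mulVec_mulVec, Matrix.nonsing_inv_mul _ hu, Matrix.one_mulVec]
  -- the scalar model ψ
  set ψ : ℝ → ℝ := fun b => (1 / 2) * ∑ i, (c i * s i) ^ 2 / (s i + b) ^ 2 with hψ_def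
  have hψapp : ∀ b : ℝ, ψ b = (1 / 2) * ∑ i, (c i * s i) ^ 2 / (s i + b) ^ 2 := fun _ => rfl
  have hφψ : ∀ b : ℝ, 0 < b → φ b = ψ b := by
    intro b hb
    show (1:ℝ)/2 * ((h + b • 1)⁻¹ *ᵥ (h *ᵥ z) ⬝ᵥ (h + b • 1)⁻¹ *ᵥ (h *ᵥ z)) = _
    rw [hw b hb, hnorm, hψapp]
    congr 1
    exact Finset.sum_congr rfl fun i _ => by rw [div_pow]
  -- positivity
  have hψpos : ∀ b : ℝ, 0 ≤ b → 0 < ψ b := by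
    intro b hb
    have hsum : 0 < ∑ i, (c i * s i) ^ 2 / (s i + b) ^ 2 := by
      refine Finset.sum_pos' (fun i _ => div_nonneg (sq_nonneg _) (sq_nonneg _))
        ⟨i0, Finset.mem_univ _, div_pos hsqpos (pow_pos (by linarith) 2)⟩
    rw [hψapp]; linarith
  -- continuity on Ici 0
  have hψcont : ContinuousOn ψ (Set.Ici (0 : ℝ)) := by
    refine continuousOn_const.mul (continuousOn_finset_sum _ fun i _ => ?_)
    rcases eq_or_lt_of_le (hs i) with hsi | hsi
    · have : (fun b : ℝ => (c i * s i) ^ 2 / (s i + b) ^ 2) = fun _ => 0 := by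
        funext b; rw [← hsi]; simp
      rw [this]; exact continuousOn_const
    · exact continuousOn_const.div
        ((continuousOn_const.add continuousOn_id).pow 2)
        (fun x hx => pow_ne_zero 2 (ne_of_gt (by
          have hx0 : (0:ℝ) ≤ x := hx
          linarith)))
  -- strict antitonicity on Ici 0
  have hψanti : StrictAntiOn ψ (Set.Ici (0 : ℝ)) := by
    intro a ha b hb hab
    have ha' : (0:ℝ) ≤ a := ha
    have key : ∀ i ∈ Finset.univ, (c i * s i) ^ 2 / (s i + b) ^ 2
        ≤ (c i * s i) ^ 2 / (s i + a) ^ 2 := by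
      intro i _
      rcases eq_or_lt_of_le (hs i) with hsi | hsi
      · rw [← hsi]; simp
      · exact div_le_div_of_nonneg_left (sq_nonneg _) (pow_pos (by linarith) 2)
          (by nlinarith)
    have keyi0 : (c i0 * s i0) ^ 2 / (s i0 + b) ^ 2 < (c i0 * s i0) ^ 2 / (s i0 + a) ^ 2 :=
      div_lt_div_of_pos_left hsqpos (pow_pos (by linarith) 2) (by nlinarith)
    have hlt := Finset.sum_lt_sum key ⟨i0, Finset.mem_univ _, keyi0⟩
    rw [hψapp, hψapp]; linarith
  -- limit at infinity
  have hψtend : Filter.Tendsto ψ Filter.atTop (nhds 0) := by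
    have hterm : ∀ i : I, Filter.Tendsto (fun b : ℝ => (c i * s i) ^ 2 / (s i + b) ^ 2)
        Filter.atTop (nhds 0) := by
      intro i
      apply Filter.Tendsto.div_atTop tendsto_const_nhds
      exact (Filter.tendsto_pow_atTop (two_ne_zero)).comp
        (Filter.tendsto_atTop_add_const_left _ _ Filter.tendsto_id)
    have hsum := tendsto_finset_sum Finset.univ fun i (_ : i ∈ Finset.univ) => hterm i
    have h2 := hsum.const_mul (1 / 2 : ℝ)
    rw [hψ_def]
    simpa using h2
  -- Parseval
  have hpars : z ⬝ᵥ z = ∑ i, c i ^ 2 := by rw [← hzdec, hnorm]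
  set B : ℝ := (z ⬝ᵥ z) / 2 with hB_def
  have hBe : B = (∑ i, c i ^ 2) / 2 := by rw [hB_def, hpars]
  have hBpos : 0 < B := by
    have : 0 < ∑ i, c i ^ 2 :=
      Finset.sum_pos' (fun i _ => sq_nonneg _) ⟨i0, Finset.mem_univ _, hcsq⟩
    rw [hBe]; linarith
  have hψB : ψ B < B := by
    have key : ∀ i ∈ Finset.univ, (c i * s i) ^ 2 / (s i + B) ^ 2 ≤ c i ^ 2 := by
      intro i _
      rw [div_le_iff₀ (pow_pos (by linarith [hs i]) 2)]
      nlinarith [mul_nonneg (sq_nonneg (c i)) (mul_nonneg (hs i) hBpos.le),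
        mul_nonneg (sq_nonneg (c i)) (sq_nonneg B)]
    have keyi0 : (c i0 * s i0) ^ 2 / (s i0 + B) ^ 2 < c i0 ^ 2 := by
      rw [div_lt_iff₀ (pow_pos (by linarith) 2)]
      nlinarith [mul_pos hcsq (mul_pos hs0 hBpos), mul_pos hcsq (mul_pos hBpos hBpos)]
    have hlt := Finset.sum_lt_sum key ⟨i0, Finset.mem_univ _, keyi0⟩
    rw [hψapp]; linarith
  -- fixed point
  set g : ℝ → ℝ := fun b => ψ b - b with hg_def
  have hgapp : ∀ b : ℝ, g b = ψ b - b := fun _ => rfl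
  have hgcont : ContinuousOn g (Set.Icc 0 B) :=
    (hψcont.mono Set.Icc_subset_Ici_self).sub continuousOn_id
  have hganti : StrictAntiOn g (Set.Ici (0 : ℝ)) := by
    intro a ha b hb hab
    have := hψanti ha hb hab
    rw [hgapp, hgapp]; linarith
  obtain ⟨b0, hb0mem, hb0⟩ : ∃ b0 ∈ Set.Ioo (0:ℝ) B, g b0 = 0 := by
    have himage := intermediate_value_Ioo' (le_of_lt hBpos) hgcont
    have h0mem : (0:ℝ) ∈ Set.Ioo (g B) (g 0) := by
      constructor
      · rw [hgapp]; linarith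
      · rw [hgapp]; have := hψpos 0 le_rfl; linarith
    obtain ⟨b0, hb0mem, hb0⟩ := himage h0mem
    exact ⟨b0, hb0mem, hb0⟩
  -- assemble
  refine ⟨?_, ?_, ?_, ?_, ?_, ?_⟩
  · intro b hb
    rw [hφψ b hb]
    exact hψpos b (le_of_lt hb)
  · exact (hψcont.mono fun x hx => (le_of_lt hx : (0:ℝ) ≤ x)).congr fun b hb => hφψ b hb
  · intro a ha b hb hab
    rw [hφψ a ha, hφψ b hb]
    exact hψanti (le_of_lt ha : (0:ℝ) ≤ a) (le_of_lt hb : (0:ℝ) ≤ b) hab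
  · refine hψtend.congr' ?_
    filter_upwards [Filter.eventually_gt_atTop (0:ℝ)] with b hb
    exact (hφψ b hb).symm
  · rw [hφψ _ hBpos]; exact hψB
  · refine ⟨b0, ⟨hb0mem, ?_⟩, ?_⟩
    · rw [hφψ b0 hb0mem.1]
      rw [hgapp] at hb0
      linarith
    · rintro b1 ⟨hb1mem, hb1⟩
      rw [hφψ b1 hb1mem.1] at hb1
      have hg1 : g b1 = 0 := by rw [hgapp]; linarith
      exact hganti.injOn (le_of_lt hb1mem.1) (le_of_lt hb0mem.1) (by rw [hg1, hb0])
end
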